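/- Let H be a nonempty planar axis-aligned region, and for i = 1,2 let u_i, o_i : ℝ → ℝ be affine functions such that u_i(x_i) ≤ o_i(x_i) for every x = (x₁,x₂) ∈ H. Then conv{(x₁,x₂,t₁t₂) : (x₁,x₂) ∈ H and u_i(x_i) ≤ t_i ≤ o_i(x_i) for i = 1,2} = conv{(x₁,x₂,t₁t₂) : (x₁,x₂) ∈ corner(H) and t_i ∈ {u_i(x_i), o_i(x_i)} for i = 1,2}. -/

import Mathlib

/-- A planar axis-aligned region: a finite union of closed axis-aligned rectangles. -/
def IsPlanarAxisAligned (H : Set (ℝ × ℝ)) : Prop :=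
  ∃ R : Finset ((ℝ × ℝ) × (ℝ × ℝ)),
    (∀ r ∈ R, r.1.1 ≤ r.2.1 ∧ r.1.2 ≤ r.2.2) ∧
    H = ⋃ r ∈ R, Set.Icc r.1.1 r.2.1 ×ˢ Set.Icc r.1.2 r.2.2

/-- The corner points of a planar region `H`: points of `H` each of whose coordinates is an
extreme point of the convex hull of the corresponding axis-parallel slice of `H`. -/
def cornerSet (H : Set (ℝ × ℝ)) : Set (ℝ × ℝ) :=
  {v | v ∈ H ∧
    v.1 ∈ Set.extremePoints ℝ (convexHull ℝ {x1 : ℝ | (x1, v.2) ∈ H}) ∧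
    v.2 ∈ Set.extremePoints ℝ (convexHull ℝ {x2 : ℝ | (v.1, x2) ∈ H})}

section AuxProductCorner

open Set


lemma aux_combo_mem {P : Set (ℝ × ℝ × ℝ)} {p q : ℝ × ℝ × ℝ} (hp : p ∈ P) (hq : q ∈ P)
    {l : ℝ} (h0 : 0 ≤ l) (h1 : l ≤ 1) :
    l • p + (1 - l) • q ∈ convexHull ℝ P :=
  (convex_convexHull ℝ P) (subset_convexHull ℝ P hp) (subset_convexHull ℝ P hq)
    h0 (by linarith) (by ring)

lemma aux_combo_point {a b t : ℝ} (ha : a ≤ t) (hb : t ≤ b) :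
    ∃ l : ℝ, 0 ≤ l ∧ l ≤ 1 ∧ l * a + (1 - l) * b = t := by
  rcases eq_or_lt_of_le (ha.trans hb) with h | h
  · exact ⟨1, zero_le_one, le_rfl, by nlinarith⟩
  · refine ⟨(b - t) / (b - a), div_nonneg (by linarith) (by linarith), ?_, ?_⟩
    · rw [div_le_one (by linarith)]; linarith
    · have hne : b - a ≠ 0 := by linarith
      field_simp
      ring

/-- endpoint selector -/
def auxE (u o : ℝ → ℝ) : Bool → ℝ → ℝ := fun b => if b then o else u

/-- lifted endpoint-choice points over `H` -/
def auxS0 (H : Set (ℝ × ℝ)) (u1 u2 o1 o2 : ℝ → ℝ) : Set (ℝ × ℝ × ℝ) :=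
  {p | ∃ x1 x2 : ℝ, ∃ b1 b2 : Bool, (x1, x2) ∈ H ∧
    p = (x1, x2, auxE u1 o1 b1 x1 * auxE u2 o2 b2 x2)}

/-- lifted endpoint-choice points over `H` with second coordinate on the grid -/
def auxS1 (H : Set (ℝ × ℝ)) (G2 : Finset ℝ) (u1 u2 o1 o2 : ℝ → ℝ) : Set (ℝ × ℝ × ℝ) :=
  {p | ∃ x1 x2 : ℝ, ∃ b1 b2 : Bool, (x1, x2) ∈ H ∧ x2 ∈ G2 ∧
    p = (x1, x2, auxE u1 o1 b1 x1 * auxE u2 o2 b2 x2)}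

/-- lifted endpoint-choice points over `H` with both coordinates on the grid -/
def auxS2 (H : Set (ℝ × ℝ)) (G1 G2 : Finset ℝ) (u1 u2 o1 o2 : ℝ → ℝ) : Set (ℝ × ℝ × ℝ) :=
  {p | ∃ x1 x2 : ℝ, ∃ b1 b2 : Bool, (x1, x2) ∈ H ∧ x1 ∈ G1 ∧ x2 ∈ G2 ∧
    p = (x1, x2, auxE u1 o1 b1 x1 * auxE u2 o2 b2 x2)}

lemma auxE_affine {u o : ℝ → ℝ} (hu : ∃ c d : ℝ, ∀ x, u x = c * x + d)
    (ho : ∃ c d : ℝ, ∀ x, o x = c * x + d) (b : Bool) :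
    ∃ c d : ℝ, ∀ x, auxE u o b x = c * x + d := by
  cases b
  · simpa [auxE] using hu
  · simpa [auxE] using ho

lemma aux_step0 (H : Set (ℝ × ℝ)) (u1 u2 o1 o2 : ℝ → ℝ) :
    {p : ℝ × ℝ × ℝ | ∃ x1 x2 t1 t2 : ℝ,
        (x1, x2) ∈ H ∧ u1 x1 ≤ t1 ∧ t1 ≤ o1 x1 ∧ u2 x2 ≤ t2 ∧ t2 ≤ o2 x2 ∧
        p = (x1, x2, t1 * t2)} ⊆ convexHull ℝ (auxS0 H u1 u2 o1 o2) := by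
  rintro p ⟨x1, x2, t1, t2, hxH, h1, h2, h3, h4, rfl⟩
  obtain ⟨l, hl0, hl1, hlt⟩ := aux_combo_point h1 h2
  obtain ⟨m, hm0, hm1, hmt⟩ := aux_combo_point h3 h4
  have q : ∀ b1 b2 : Bool,
      (x1, x2, auxE u1 o1 b1 x1 * auxE u2 o2 b2 x2) ∈ auxS0 H u1 u2 o1 o2 :=
    fun b1 b2 => ⟨x1, x2, b1, b2, hxH, rfl⟩
  have hA := aux_combo_mem (q false false) (q false true) hm0 hm1
  have hB := aux_combo_mem (q true false) (q true true) hm0 hm1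
  have hfin := (convex_convexHull ℝ (auxS0 H u1 u2 o1 o2)) hA hB (a := l) (b := 1 - l) hl0 (by linarith) (by ring)
  have heq : (x1, x2, t1 * t2) =
      l • (m • (x1, x2, auxE u1 o1 false x1 * auxE u2 o2 false x2) +
           (1 - m) • (x1, x2, auxE u1 o1 false x1 * auxE u2 o2 true x2)) +
      (1 - l) • (m • (x1, x2, auxE u1 o1 true x1 * auxE u2 o2 false x2) +
           (1 - m) • (x1, x2, auxE u1 o1 true x1 * auxE u2 o2 true x2)) := by
    simp only [auxE, if_true, if_false, Bool.false_eq_true, ite_false, ite_true,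
      Prod.smul_mk, Prod.mk_add_mk, smul_eq_mul, Prod.mk.injEq]
    refine ⟨by ring, by ring, ?_⟩
    rw [← hlt, ← hmt]; ring
  rw [heq]; exact hfin
lemma aux_move2 {P : Set (ℝ × ℝ × ℝ)} {x1 x2 a b c d : ℝ} (ha : a ≤ x2) (hb : x2 ≤ b)
    (hpa : (x1, a, c * a + d) ∈ P) (hpb : (x1, b, c * b + d) ∈ P) :
    (x1, x2, c * x2 + d) ∈ convexHull ℝ P := by
  obtain ⟨l, h0, h1, hl⟩ := aux_combo_point ha hb
  have hmem := aux_combo_mem hpa hpb h0 h1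
  have heq : (x1, x2, c * x2 + d)
      = l • (x1, a, c * a + d) + (1 - l) • (x1, b, c * b + d) := by
    simp only [Prod.smul_mk, Prod.mk_add_mk, smul_eq_mul, Prod.mk.injEq]
    refine ⟨by ring, hl.symm, by linear_combination (-c) * hl⟩
  rw [heq]; exact hmem

lemma aux_move1 {P : Set (ℝ × ℝ × ℝ)} {x1 x2 a b c d : ℝ} (ha : a ≤ x1) (hb : x1 ≤ b)
    (hpa : (a, x2, c * a + d) ∈ P) (hpb : (b, x2, c * b + d) ∈ P) :
    (x1, x2, c * x1 + d) ∈ convexHull ℝ P := by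
  obtain ⟨l, h0, h1, hl⟩ := aux_combo_point ha hb
  have hmem := aux_combo_mem hpa hpb h0 h1
  have heq : (x1, x2, c * x1 + d)
      = l • (a, x2, c * a + d) + (1 - l) • (b, x2, c * b + d) := by
    simp only [Prod.smul_mk, Prod.mk_add_mk, smul_eq_mul, Prod.mk.injEq]
    refine ⟨hl.symm, by ring, by linear_combination (-c) * hl⟩
  rw [heq]; exact hmem

lemma aux_slice1 {R : Finset ((ℝ × ℝ) × (ℝ × ℝ))} (hR : ∀ r ∈ R, r.1.1 ≤ r.2.1 ∧ r.1.2 ≤ r.2.2)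
    {H : Set (ℝ × ℝ)} (hHeq : H = ⋃ r ∈ R, Set.Icc r.1.1 r.2.1 ×ˢ Set.Icc r.1.2 r.2.2)
    {x1 y : ℝ} (hx : (x1, y) ∈ H) :
    ∃ a b : ℝ, (a, y) ∈ H ∧ (b, y) ∈ H ∧ (∃ r ∈ R, a = r.1.1) ∧ (∃ r ∈ R, b = r.2.1) ∧
      ∀ t : ℝ, (t, y) ∈ H → a ≤ t ∧ t ≤ b := by
  classical
  set s : Set ℝ := {t | (t, y) ∈ H} with hsdef
  have hseq : s = ⋃ r ∈ (↑(R.filter (fun r => r.1.2 ≤ y ∧ y ≤ r.2.2)) :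
      Set ((ℝ × ℝ) × (ℝ × ℝ))), Set.Icc r.1.1 r.2.1 := by
    ext t
    simp only [hsdef, hHeq, Set.mem_setOf_eq, Set.mem_iUnion, Set.mem_prod, Set.mem_Icc,
      Finset.coe_filter, Finset.mem_coe, Finset.mem_filter, exists_prop]
    constructor
    · rintro ⟨r, hr, ⟨h11, h12⟩, hy1, hy2⟩
      exact ⟨r, ⟨hr, hy1, hy2⟩, h11, h12⟩
    · rintro ⟨r, ⟨hr, hy1, hy2⟩, h11, h12⟩
      exact ⟨r, hr, ⟨h11, h12⟩, hy1, hy2⟩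
  have hfin : (↑(R.filter (fun r => r.1.2 ≤ y ∧ y ≤ r.2.2)) :
      Set ((ℝ × ℝ) × (ℝ × ℝ))).Finite := Finset.finite_toSet _
  have hcl : IsClosed s := by
    rw [hseq]; exact hfin.isClosed_biUnion (fun i _ => isClosed_Icc)
  have hbb : BddBelow s := by
    rw [hseq]; exact (hfin.bddBelow_biUnion).2 (fun i _ => bddBelow_Icc)
  have hba : BddAbove s := by
    rw [hseq]; exact (hfin.bddAbove_biUnion).2 (fun i _ => bddAbove_Icc)
  have hsne : s.Nonempty := ⟨x1, hx⟩
  have hainf : sInf s ∈ s := hcl.csInf_mem hsne hbb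
  have hbsup : sSup s ∈ s := hcl.csSup_mem hsne hba
  have hInfG : ∃ r ∈ R, sInf s = r.1.1 := by
    have hmem : (sInf s, y) ∈ H := hainf
    rw [hHeq] at hmem
    simp only [Set.mem_iUnion, Set.mem_prod, Set.mem_Icc, exists_prop] at hmem
    obtain ⟨r, hr, ⟨h11, _⟩, hy1, hy2⟩ := hmem
    refine ⟨r, hr, le_antisymm ?_ h11⟩
    apply csInf_le hbb
    show (r.1.1, y) ∈ H
    rw [hHeq]
    simp only [Set.mem_iUnion, Set.mem_prod, Set.mem_Icc, exists_prop]
    exact ⟨r, hr, ⟨le_rfl, (hR r hr).1⟩, hy1, hy2⟩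
  have hSupG : ∃ r ∈ R, sSup s = r.2.1 := by
    have hmem : (sSup s, y) ∈ H := hbsup
    rw [hHeq] at hmem
    simp only [Set.mem_iUnion, Set.mem_prod, Set.mem_Icc, exists_prop] at hmem
    obtain ⟨r, hr, ⟨_, h12⟩, hy1, hy2⟩ := hmem
    refine ⟨r, hr, le_antisymm h12 ?_⟩
    apply le_csSup hba
    show (r.2.1, y) ∈ H
    rw [hHeq]
    simp only [Set.mem_iUnion, Set.mem_prod, Set.mem_Icc, exists_prop]
    exact ⟨r, hr, ⟨(hR r hr).1, le_rfl⟩, hy1, hy2⟩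
  exact ⟨sInf s, sSup s, hainf, hbsup, hInfG, hSupG,
    fun t ht => ⟨csInf_le hbb ht, le_csSup hba ht⟩⟩

lemma aux_slice2 {R : Finset ((ℝ × ℝ) × (ℝ × ℝ))} (hR : ∀ r ∈ R, r.1.1 ≤ r.2.1 ∧ r.1.2 ≤ r.2.2)
    {H : Set (ℝ × ℝ)} (hHeq : H = ⋃ r ∈ R, Set.Icc r.1.1 r.2.1 ×ˢ Set.Icc r.1.2 r.2.2)
    {x y : ℝ} (hx : (x, y) ∈ H) :
    ∃ a b : ℝ, (x, a) ∈ H ∧ (x, b) ∈ H ∧ (∃ r ∈ R, a = r.1.2) ∧ (∃ r ∈ R, b = r.2.2) ∧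
      ∀ t : ℝ, (x, t) ∈ H → a ≤ t ∧ t ≤ b := by
  classical
  set s : Set ℝ := {t | (x, t) ∈ H} with hsdef
  have hseq : s = ⋃ r ∈ (↑(R.filter (fun r => r.1.1 ≤ x ∧ x ≤ r.2.1)) :
      Set ((ℝ × ℝ) × (ℝ × ℝ))), Set.Icc r.1.2 r.2.2 := by
    ext t
    simp only [hsdef, hHeq, Set.mem_setOf_eq, Set.mem_iUnion, Set.mem_prod, Set.mem_Icc,
      Finset.coe_filter, Finset.mem_coe, Finset.mem_filter, exists_prop]
    constructor
    · rintro ⟨r, hr, ⟨h11, h12⟩, hy1, hy2⟩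
      exact ⟨r, ⟨hr, h11, h12⟩, hy1, hy2⟩
    · rintro ⟨r, ⟨hr, h11, h12⟩, hy1, hy2⟩
      exact ⟨r, hr, ⟨h11, h12⟩, hy1, hy2⟩
  have hfin : (↑(R.filter (fun r => r.1.1 ≤ x ∧ x ≤ r.2.1)) :
      Set ((ℝ × ℝ) × (ℝ × ℝ))).Finite := Finset.finite_toSet _
  have hcl : IsClosed s := by
    rw [hseq]; exact hfin.isClosed_biUnion (fun i _ => isClosed_Icc)
  have hbb : BddBelow s := by
    rw [hseq]; exact (hfin.bddBelow_biUnion).2 (fun i _ => bddBelow_Icc)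
  have hba : BddAbove s := by
    rw [hseq]; exact (hfin.bddAbove_biUnion).2 (fun i _ => bddAbove_Icc)
  have hsne : s.Nonempty := ⟨y, hx⟩
  have hainf : sInf s ∈ s := hcl.csInf_mem hsne hbb
  have hbsup : sSup s ∈ s := hcl.csSup_mem hsne hba
  have hInfG : ∃ r ∈ R, sInf s = r.1.2 := by
    have hmem : (x, sInf s) ∈ H := hainf
    rw [hHeq] at hmem
    simp only [Set.mem_iUnion, Set.mem_prod, Set.mem_Icc, exists_prop] at hmem
    obtain ⟨r, hr, ⟨h11, h12⟩, hy1, _⟩ := hmem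
    refine ⟨r, hr, le_antisymm ?_ hy1⟩
    apply csInf_le hbb
    show (x, r.1.2) ∈ H
    rw [hHeq]
    simp only [Set.mem_iUnion, Set.mem_prod, Set.mem_Icc, exists_prop]
    exact ⟨r, hr, ⟨h11, h12⟩, le_rfl, (hR r hr).2⟩
  have hSupG : ∃ r ∈ R, sSup s = r.2.2 := by
    have hmem : (x, sSup s) ∈ H := hbsup
    rw [hHeq] at hmem
    simp only [Set.mem_iUnion, Set.mem_prod, Set.mem_Icc, exists_prop] at hmem
    obtain ⟨r, hr, ⟨h11, h12⟩, _, hy2⟩ := hmem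
    refine ⟨r, hr, le_antisymm hy2 ?_⟩
    apply le_csSup hba
    show (x, r.2.2) ∈ H
    rw [hHeq]
    simp only [Set.mem_iUnion, Set.mem_prod, Set.mem_Icc, exists_prop]
    exact ⟨r, hr, ⟨h11, h12⟩, (hR r hr).2, le_rfl⟩
  exact ⟨sInf s, sSup s, hainf, hbsup, hInfG, hSupG,
    fun t ht => ⟨csInf_le hbb ht, le_csSup hba ht⟩⟩

lemma aux_step1 {R : Finset ((ℝ × ℝ) × (ℝ × ℝ))} (hR : ∀ r ∈ R, r.1.1 ≤ r.2.1 ∧ r.1.2 ≤ r.2.2)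
    {H : Set (ℝ × ℝ)} (hHeq : H = ⋃ r ∈ R, Set.Icc r.1.1 r.2.1 ×ˢ Set.Icc r.1.2 r.2.2)
    (u1 u2 o1 o2 : ℝ → ℝ)
    (hu2 : ∃ c d : ℝ, ∀ x, u2 x = c * x + d) (ho2 : ∃ c d : ℝ, ∀ x, o2 x = c * x + d)
    {G2 : Finset ℝ} (hG2 : ∀ r ∈ R, r.1.2 ∈ G2 ∧ r.2.2 ∈ G2) :
    auxS0 H u1 u2 o1 o2 ⊆ convexHull ℝ (auxS1 H G2 u1 u2 o1 o2) := by
  rintro p ⟨x1, x2, b1, b2, hxH, rfl⟩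
  obtain ⟨a, b, haH, hbH, haG, hbG, hbound⟩ := aux_slice2 hR hHeq hxH
  obtain ⟨c, d, hcd⟩ := auxE_affine hu2 ho2 b2
  set K := auxE u1 o1 b1 x1 with hK
  have hpa : (x1, a, K * c * a + K * d) ∈ auxS1 H G2 u1 u2 o1 o2 := by
    have h3 : K * c * a + K * d = K * auxE u2 o2 b2 a := by rw [hcd]; ring
    rw [h3]
    refine ⟨x1, a, b1, b2, haH, ?_, rfl⟩
    obtain ⟨r, hr, rfl⟩ := haG
    exact (hG2 r hr).1
  have hpb : (x1, b, K * c * b + K * d) ∈ auxS1 H G2 u1 u2 o1 o2 := by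
    have h3 : K * c * b + K * d = K * auxE u2 o2 b2 b := by rw [hcd]; ring
    rw [h3]
    refine ⟨x1, b, b1, b2, hbH, ?_, rfl⟩
    obtain ⟨r, hr, rfl⟩ := hbG
    exact (hG2 r hr).2
  have hmove := aux_move2 (hbound x2 hxH).1 (hbound x2 hxH).2 hpa hpb
  have h4 : K * auxE u2 o2 b2 x2 = K * c * x2 + K * d := by rw [hcd]; ring
  rw [h4]; exact hmove

lemma aux_step2 {R : Finset ((ℝ × ℝ) × (ℝ × ℝ))} (hR : ∀ r ∈ R, r.1.1 ≤ r.2.1 ∧ r.1.2 ≤ r.2.2)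
    {H : Set (ℝ × ℝ)} (hHeq : H = ⋃ r ∈ R, Set.Icc r.1.1 r.2.1 ×ˢ Set.Icc r.1.2 r.2.2)
    (u1 u2 o1 o2 : ℝ → ℝ)
    (hu1 : ∃ c d : ℝ, ∀ x, u1 x = c * x + d) (ho1 : ∃ c d : ℝ, ∀ x, o1 x = c * x + d)
    {G1 G2 : Finset ℝ} (hG1 : ∀ r ∈ R, r.1.1 ∈ G1 ∧ r.2.1 ∈ G1) :
    auxS1 H G2 u1 u2 o1 o2 ⊆ convexHull ℝ (auxS2 H G1 G2 u1 u2 o1 o2) := by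
  rintro p ⟨x1, x2, b1, b2, hxH, hxG2, rfl⟩
  obtain ⟨a, b, haH, hbH, haG, hbG, hbound⟩ := aux_slice1 hR hHeq hxH
  obtain ⟨c, d, hcd⟩ := auxE_affine hu1 ho1 b1
  set K := auxE u2 o2 b2 x2 with hK
  have hpa : (a, x2, c * K * a + d * K) ∈ auxS2 H G1 G2 u1 u2 o1 o2 := by
    have h3 : c * K * a + d * K = auxE u1 o1 b1 a * K := by rw [hcd]; ring
    rw [h3]
    refine ⟨a, x2, b1, b2, haH, ?_, hxG2, rfl⟩
    obtain ⟨r, hr, rfl⟩ := haG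
    exact (hG1 r hr).1
  have hpb : (b, x2, c * K * b + d * K) ∈ auxS2 H G1 G2 u1 u2 o1 o2 := by
    have h3 : c * K * b + d * K = auxE u1 o1 b1 b * K := by rw [hcd]; ring
    rw [h3]
    refine ⟨b, x2, b1, b2, hbH, ?_, hxG2, rfl⟩
    obtain ⟨r, hr, rfl⟩ := hbG
    exact (hG1 r hr).2
  have hmove := aux_move1 (hbound x1 hxH).1 (hbound x1 hxH).2 hpa hpb
  have h4 : auxE u1 o1 b1 x1 * K = c * K * x1 + d * K := by rw [hcd]; ring
  rw [h4]; exact hmove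

lemma aux_stepQ {R : Finset ((ℝ × ℝ) × (ℝ × ℝ))} (hR : ∀ r ∈ R, r.1.1 ≤ r.2.1 ∧ r.1.2 ≤ r.2.2)
    {H : Set (ℝ × ℝ)} (hHeq : H = ⋃ r ∈ R, Set.Icc r.1.1 r.2.1 ×ˢ Set.Icc r.1.2 r.2.2)
    (u1 u2 o1 o2 : ℝ → ℝ)
    {G1 G2 : Finset ℝ} (hG1 : ∀ r ∈ R, r.1.1 ∈ G1 ∧ r.2.1 ∈ G1)
    (hG2 : ∀ r ∈ R, r.1.2 ∈ G2 ∧ r.2.2 ∈ G2) :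
    {p : ℝ × ℝ × ℝ | ∃ x1 x2 t1 t2 : ℝ,
        (x1, x2) ∈ cornerSet H ∧ (t1 = u1 x1 ∨ t1 = o1 x1) ∧ (t2 = u2 x2 ∨ t2 = o2 x2) ∧
        p = (x1, x2, t1 * t2)} ⊆ auxS2 H G1 G2 u1 u2 o1 o2 := by
  rintro p ⟨x1, x2, t1, t2, ⟨hvH, he1, he2⟩, ht1, ht2, rfl⟩
  have hrect := hvH
  rw [hHeq] at hrect
  simp only [Set.mem_iUnion, Set.mem_prod, Set.mem_Icc, exists_prop] at hrect
  obtain ⟨r, hr, ⟨h11, h12⟩, h21, h22⟩ := hrect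
  have hx1G : x1 ∈ G1 := by
    rcases eq_or_ne x1 r.1.1 with h | h
    · rw [h]; exact (hG1 r hr).1
    rcases eq_or_ne x1 r.2.1 with h' | h'
    · rw [h']; exact (hG1 r hr).2
    exfalso
    have hr1mem : r.1.1 ∈ {t : ℝ | (t, x2) ∈ H} := by
      show (r.1.1, x2) ∈ H
      rw [hHeq]
      simp only [Set.mem_iUnion, Set.mem_prod, Set.mem_Icc, exists_prop]
      exact ⟨r, hr, ⟨le_rfl, (hR r hr).1⟩, h21, h22⟩
    have hr2mem : r.2.1 ∈ {t : ℝ | (t, x2) ∈ H} := by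
      show (r.2.1, x2) ∈ H
      rw [hHeq]
      simp only [Set.mem_iUnion, Set.mem_prod, Set.mem_Icc, exists_prop]
      exact ⟨r, hr, ⟨(hR r hr).1, le_rfl⟩, h21, h22⟩
    have hsegm : x1 ∈ segment ℝ r.1.1 r.2.1 := by
      rw [segment_eq_Icc (hR r hr).1]; exact ⟨h11, h12⟩
    have hdisj := (mem_extremePoints_iff_forall_segment.1 he1).2 _
      (subset_convexHull ℝ _ hr1mem) _ (subset_convexHull ℝ _ hr2mem) hsegm
    rcases hdisj with h'' | h''
    · exact h h''.symm
    · exact h' h''.symm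
  have hx2G : x2 ∈ G2 := by
    rcases eq_or_ne x2 r.1.2 with h | h
    · rw [h]; exact (hG2 r hr).1
    rcases eq_or_ne x2 r.2.2 with h' | h'
    · rw [h']; exact (hG2 r hr).2
    exfalso
    have hr1mem : r.1.2 ∈ {t : ℝ | (x1, t) ∈ H} := by
      show (x1, r.1.2) ∈ H
      rw [hHeq]
      simp only [Set.mem_iUnion, Set.mem_prod, Set.mem_Icc, exists_prop]
      exact ⟨r, hr, ⟨h11, h12⟩, le_rfl, (hR r hr).2⟩
    have hr2mem : r.2.2 ∈ {t : ℝ | (x1, t) ∈ H} := by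
      show (x1, r.2.2) ∈ H
      rw [hHeq]
      simp only [Set.mem_iUnion, Set.mem_prod, Set.mem_Icc, exists_prop]
      exact ⟨r, hr, ⟨h11, h12⟩, (hR r hr).2, le_rfl⟩
    have hsegm : x2 ∈ segment ℝ r.1.2 r.2.2 := by
      rw [segment_eq_Icc (hR r hr).2]; exact ⟨h21, h22⟩
    have hdisj := (mem_extremePoints_iff_forall_segment.1 he2).2 _
      (subset_convexHull ℝ _ hr1mem) _ (subset_convexHull ℝ _ hr2mem) hsegm
    rcases hdisj with h'' | h''
    · exact h h''.symm
    · exact h' h''.symm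
  rcases ht1 with rfl | rfl <;> rcases ht2 with rfl | rfl
  · exact ⟨x1, x2, false, false, hvH, hx1G, hx2G, by simp [auxE]⟩
  · exact ⟨x1, x2, false, true, hvH, hx1G, hx2G, by simp [auxE]⟩
  · exact ⟨x1, x2, true, false, hvH, hx1G, hx2G, by simp [auxE]⟩
  · exact ⟨x1, x2, true, true, hvH, hx1G, hx2G, by simp [auxE]⟩
lemma aux_step3 {R : Finset ((ℝ × ℝ) × (ℝ × ℝ))} (hR : ∀ r ∈ R, r.1.1 ≤ r.2.1 ∧ r.1.2 ≤ r.2.2)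
    {H : Set (ℝ × ℝ)} (hHeq : H = ⋃ r ∈ R, Set.Icc r.1.1 r.2.1 ×ˢ Set.Icc r.1.2 r.2.2)
    (u1 u2 o1 o2 : ℝ → ℝ)
    (hu1 : ∃ c d : ℝ, ∀ x, u1 x = c * x + d) (hu2 : ∃ c d : ℝ, ∀ x, u2 x = c * x + d)
    (ho1 : ∃ c d : ℝ, ∀ x, o1 x = c * x + d) (ho2 : ∃ c d : ℝ, ∀ x, o2 x = c * x + d)
    {G1 G2 : Finset ℝ} (hG1 : ∀ r ∈ R, r.1.1 ∈ G1 ∧ r.2.1 ∈ G1)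
    (hG2 : ∀ r ∈ R, r.1.2 ∈ G2 ∧ r.2.2 ∈ G2) :
    convexHull ℝ (auxS2 H G1 G2 u1 u2 o1 o2) ⊆
      convexHull ℝ {p : ℝ × ℝ × ℝ | ∃ x1 x2 t1 t2 : ℝ,
        (x1, x2) ∈ cornerSet H ∧ (t1 = u1 x1 ∨ t1 = o1 x1) ∧ (t2 = u2 x2 ∨ t2 = o2 x2) ∧
        p = (x1, x2, t1 * t2)} := by
  classical
  set S2 := auxS2 H G1 G2 u1 u2 o1 o2 with hS2def
  set Q := {p : ℝ × ℝ × ℝ | ∃ x1 x2 t1 t2 : ℝ,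
        (x1, x2) ∈ cornerSet H ∧ (t1 = u1 x1 ∨ t1 = o1 x1) ∧ (t2 = u2 x2 ∨ t2 = o2 x2) ∧
        p = (x1, x2, t1 * t2)} with hQdef
  have hfin : S2.Finite := by
    have himg : S2 ⊆ (fun q : (ℝ × ℝ) × Bool × Bool =>
        (q.1.1, q.1.2, auxE u1 o1 q.2.1 q.1.1 * auxE u2 o2 q.2.2 q.1.2)) ''
        ((↑(G1 ×ˢ G2) : Set (ℝ × ℝ)) ×ˢ (Set.univ : Set (Bool × Bool))) := by
      rintro p ⟨x1, x2, b1, b2, hxH, h1, h2, rfl⟩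
      exact ⟨((x1, x2), (b1, b2)),
        ⟨by simp only [Finset.coe_product, Set.mem_prod, Finset.mem_coe]; exact ⟨h1, h2⟩,
          Set.mem_univ _⟩, rfl⟩
    exact Set.Finite.subset (Set.Finite.image _
      ((Finset.finite_toSet _).prod Set.finite_univ)) himg
  have hEQ : Set.extremePoints ℝ (convexHull ℝ S2) ⊆ Q := by
    intro p hp
    have hpS2 : p ∈ S2 := extremePoints_convexHull_subset hp
    obtain ⟨x1, x2, b1, b2, hxH, hxG1, hxG2, rfl⟩ := hpS2
    obtain ⟨c1, d1, hcd1⟩ := auxE_affine hu1 ho1 b1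
    obtain ⟨c2, d2, hcd2⟩ := auxE_affine hu2 ho2 b2
    have hseg := (mem_extremePoints_iff_forall_segment.1 hp).2
    have hext1 : x1 ∈ Set.extremePoints ℝ (convexHull ℝ {t : ℝ | (t, x2) ∈ H}) := by
      obtain ⟨a, b, haH, hbH, haG, hbG, hbound⟩ := aux_slice1 hR hHeq hxH
      have hhull : convexHull ℝ {t : ℝ | (t, x2) ∈ H} ⊆ Set.Icc a b :=
        convexHull_min (fun t ht => ⟨(hbound t ht).1, (hbound t ht).2⟩) (convex_Icc a b)
      rw [mem_extremePoints_iff_forall_segment]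
      refine ⟨subset_convexHull ℝ _ hxH, ?_⟩
      intro y hy z hz hxseg
      by_contra hcon
      push_neg at hcon
      obtain ⟨hy1, hz1⟩ := hcon
      rw [segment_eq_Icc' y z] at hxseg
      obtain ⟨hxm, hxM⟩ := hxseg
      have hmlt : min y z < x1 := by
        rcases lt_or_eq_of_le hxm with h | h
        · exact h
        exfalso
        rcases min_choice y z with hc | hc <;> rw [hc] at h
        · exact hy1 h
        · exact hz1 h
      have hMlt : x1 < max y z := by
        rcases lt_or_eq_of_le hxM with h | h
        · exact h
        exfalso
        rcases max_choice y z with hc | hc <;> rw [hc] at h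
        · exact hy1 h.symm
        · exact hz1 h.symm
      have halt : a < x1 := lt_of_le_of_lt (le_min (hhull hy).1 (hhull hz).1) hmlt
      have hblt : x1 < b := lt_of_lt_of_le hMlt (max_le (hhull hy).2 (hhull hz).2)
      obtain ⟨l, hl0, hl1, hlt⟩ := aux_combo_point halt.le hblt.le
      have hmemG1a : a ∈ G1 := by obtain ⟨r, hr, rfl⟩ := haG; exact (hG1 r hr).1
      have hmemG1b : b ∈ G1 := by obtain ⟨r, hr, rfl⟩ := hbG; exact (hG1 r hr).2
      have hpa : (a, x2, auxE u1 o1 b1 a * auxE u2 o2 b2 x2) ∈ S2 :=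
        ⟨a, x2, b1, b2, haH, hmemG1a, hxG2, rfl⟩
      have hpb : (b, x2, auxE u1 o1 b1 b * auxE u2 o2 b2 x2) ∈ S2 :=
        ⟨b, x2, b1, b2, hbH, hmemG1b, hxG2, rfl⟩
      have hsegm : (x1, x2, auxE u1 o1 b1 x1 * auxE u2 o2 b2 x2) ∈ segment ℝ
          (a, x2, auxE u1 o1 b1 a * auxE u2 o2 b2 x2)
          (b, x2, auxE u1 o1 b1 b * auxE u2 o2 b2 x2) := by
        refine ⟨l, 1 - l, hl0, by linarith, by ring, ?_⟩
        simp only [Prod.smul_mk, Prod.mk_add_mk, smul_eq_mul, Prod.mk.injEq]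
        refine ⟨hlt, by ring, ?_⟩
        simp only [hcd1]
        linear_combination (c1 * auxE u2 o2 b2 x2) * hlt
      have hdisj := hseg _ (subset_convexHull ℝ _ hpa) _ (subset_convexHull ℝ _ hpb) hsegm
      rcases hdisj with h | h
      · have := congrArg Prod.fst h
        simp only at this
        exact absurd this (ne_of_lt halt)
      · have := congrArg Prod.fst h
        simp only at this
        exact absurd this.symm (ne_of_lt hblt)
    have hext2 : x2 ∈ Set.extremePoints ℝ (convexHull ℝ {t : ℝ | (x1, t) ∈ H}) := by
      obtain ⟨a, b, haH, hbH, haG, hbG, hbound⟩ := aux_slice2 hR hHeq hxH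
      have hhull : convexHull ℝ {t : ℝ | (x1, t) ∈ H} ⊆ Set.Icc a b :=
        convexHull_min (fun t ht => ⟨(hbound t ht).1, (hbound t ht).2⟩) (convex_Icc a b)
      rw [mem_extremePoints_iff_forall_segment]
      refine ⟨subset_convexHull ℝ _ hxH, ?_⟩
      intro y hy z hz hxseg
      by_contra hcon
      push_neg at hcon
      obtain ⟨hy1, hz1⟩ := hcon
      rw [segment_eq_Icc' y z] at hxseg
      obtain ⟨hxm, hxM⟩ := hxseg
      have hmlt : min y z < x2 := by
        rcases lt_or_eq_of_le hxm with h | h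
        · exact h
        exfalso
        rcases min_choice y z with hc | hc <;> rw [hc] at h
        · exact hy1 h
        · exact hz1 h
      have hMlt : x2 < max y z := by
        rcases lt_or_eq_of_le hxM with h | h
        · exact h
        exfalso
        rcases max_choice y z with hc | hc <;> rw [hc] at h
        · exact hy1 h.symm
        · exact hz1 h.symm
      have halt : a < x2 := lt_of_le_of_lt (le_min (hhull hy).1 (hhull hz).1) hmlt
      have hblt : x2 < b := lt_of_lt_of_le hMlt (max_le (hhull hy).2 (hhull hz).2)
      obtain ⟨l, hl0, hl1, hlt⟩ := aux_combo_point halt.le hblt.le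
      have hmemG2a : a ∈ G2 := by obtain ⟨r, hr, rfl⟩ := haG; exact (hG2 r hr).1
      have hmemG2b : b ∈ G2 := by obtain ⟨r, hr, rfl⟩ := hbG; exact (hG2 r hr).2
      have hpa : (x1, a, auxE u1 o1 b1 x1 * auxE u2 o2 b2 a) ∈ S2 :=
        ⟨x1, a, b1, b2, haH, hxG1, hmemG2a, rfl⟩
      have hpb : (x1, b, auxE u1 o1 b1 x1 * auxE u2 o2 b2 b) ∈ S2 :=
        ⟨x1, b, b1, b2, hbH, hxG1, hmemG2b, rfl⟩
      have hsegm : (x1, x2, auxE u1 o1 b1 x1 * auxE u2 o2 b2 x2) ∈ segment ℝ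
          (x1, a, auxE u1 o1 b1 x1 * auxE u2 o2 b2 a)
          (x1, b, auxE u1 o1 b1 x1 * auxE u2 o2 b2 b) := by
        refine ⟨l, 1 - l, hl0, by linarith, by ring, ?_⟩
        simp only [Prod.smul_mk, Prod.mk_add_mk, smul_eq_mul, Prod.mk.injEq]
        refine ⟨by ring, hlt, ?_⟩
        simp only [hcd2]
        linear_combination (c2 * auxE u1 o1 b1 x1) * hlt
      have hdisj := hseg _ (subset_convexHull ℝ _ hpa) _ (subset_convexHull ℝ _ hpb) hsegm
      rcases hdisj with h | h
      · have := congrArg (fun w : ℝ × ℝ × ℝ => w.2.1) h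
        simp only at this
        exact absurd this (ne_of_lt halt)
      · have := congrArg (fun w : ℝ × ℝ × ℝ => w.2.1) h
        simp only at this
        exact absurd this.symm (ne_of_lt hblt)
    refine ⟨x1, x2, auxE u1 o1 b1 x1, auxE u2 o2 b2 x2, ⟨hxH, hext1, hext2⟩, ?_, ?_, rfl⟩
    · cases b1
      · left; simp [auxE]
      · right; simp [auxE]
    · cases b2
      · left; simp [auxE]
      · right; simp [auxE]
  have hQsub : Q ⊆ S2 := aux_stepQ hR hHeq u1 u2 o1 o2 hG1 hG2
  have hQfin : Q.Finite := hfin.subset hQsub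
  calc convexHull ℝ S2
      = closure (convexHull ℝ (Set.extremePoints ℝ (convexHull ℝ S2))) :=
        (closure_convexHull_extremePoints (hfin.isCompact_convexHull ℝ)
          (convex_convexHull ℝ S2)).symm
    _ ⊆ closure (convexHull ℝ Q) := closure_mono (convexHull_mono hEQ)
    _ = convexHull ℝ Q := (hQfin.isClosed_convexHull ℝ).closure_eq


end AuxProductCorner

/-- With affine estimators `uᵢ ≤ oᵢ` over a nonempty planar axis-aligned region `H`, the
convex hull of `{(x, t₁t₂) : x ∈ H, uᵢ(xᵢ) ≤ tᵢ ≤ oᵢ(xᵢ)}` equals the convex hull of the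
finitely many points obtained from corner points of `H` and endpoint choices of `tᵢ`. -/
theorem product_with_affine_estimators_corner_generated
    (H : Set (ℝ × ℝ)) (hne : H.Nonempty) (hH : IsPlanarAxisAligned H)
    (u1 u2 o1 o2 : ℝ → ℝ)
    (hu1 : ∃ c d : ℝ, ∀ x, u1 x = c * x + d)
    (hu2 : ∃ c d : ℝ, ∀ x, u2 x = c * x + d)
    (ho1 : ∃ c d : ℝ, ∀ x, o1 x = c * x + d)
    (ho2 : ∃ c d : ℝ, ∀ x, o2 x = c * x + d)
    (hle : ∀ x ∈ H, u1 x.1 ≤ o1 x.1 ∧ u2 x.2 ≤ o2 x.2) :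
    convexHull ℝ {p : ℝ × ℝ × ℝ | ∃ x1 x2 t1 t2 : ℝ,
        (x1, x2) ∈ H ∧ u1 x1 ≤ t1 ∧ t1 ≤ o1 x1 ∧ u2 x2 ≤ t2 ∧ t2 ≤ o2 x2 ∧
        p = (x1, x2, t1 * t2)} =
      convexHull ℝ {p : ℝ × ℝ × ℝ | ∃ x1 x2 t1 t2 : ℝ,
        (x1, x2) ∈ cornerSet H ∧ (t1 = u1 x1 ∨ t1 = o1 x1) ∧ (t2 = u2 x2 ∨ t2 = o2 x2) ∧
        p = (x1, x2, t1 * t2)} := by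
  classical
  obtain ⟨R, hR, hHeq⟩ := hH
  set G1 : Finset ℝ := R.image (fun r => r.1.1) ∪ R.image (fun r => r.2.1) with hG1def
  set G2 : Finset ℝ := R.image (fun r => r.1.2) ∪ R.image (fun r => r.2.2) with hG2def
  have hG1 : ∀ r ∈ R, r.1.1 ∈ G1 ∧ r.2.1 ∈ G1 := fun r hr =>
    ⟨Finset.mem_union_left _ (Finset.mem_image_of_mem _ hr),
     Finset.mem_union_right _ (Finset.mem_image_of_mem _ hr)⟩
  have hG2 : ∀ r ∈ R, r.1.2 ∈ G2 ∧ r.2.2 ∈ G2 := fun r hr =>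
    ⟨Finset.mem_union_left _ (Finset.mem_image_of_mem _ hr),
     Finset.mem_union_right _ (Finset.mem_image_of_mem _ hr)⟩
  apply Set.Subset.antisymm
  · apply convexHull_min _ (convex_convexHull ℝ _)
    intro p hp
    have h0 := aux_step0 H u1 u2 o1 o2 hp
    have h01 : convexHull ℝ (auxS0 H u1 u2 o1 o2) ⊆
        convexHull ℝ (auxS1 H G2 u1 u2 o1 o2) :=
      convexHull_min (aux_step1 hR hHeq u1 u2 o1 o2 hu2 ho2 hG2) (convex_convexHull ℝ _)
    have h12 : convexHull ℝ (auxS1 H G2 u1 u2 o1 o2) ⊆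
        convexHull ℝ (auxS2 H G1 G2 u1 u2 o1 o2) :=
      convexHull_min (aux_step2 hR hHeq u1 u2 o1 o2 hu1 ho1 hG1) (convex_convexHull ℝ _)
    exact aux_step3 hR hHeq u1 u2 o1 o2 hu1 hu2 ho1 ho2 hG1 hG2 (h12 (h01 h0))
  · apply convexHull_mono
    intro p hp
    have hp2 := aux_stepQ hR hHeq u1 u2 o1 o2 hG1 hG2 hp
    obtain ⟨x1, x2, b1, b2, hxH, _, _, rfl⟩ := hp2
    refine ⟨x1, x2, auxE u1 o1 b1 x1, auxE u2 o2 b2 x2, hxH, ?_, ?_, ?_, ?_, rfl⟩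
    · cases b1
      · simp [auxE]
      · simpa [auxE] using (hle (x1, x2) hxH).1
    · cases b1
      · simpa [auxE] using (hle (x1, x2) hxH).1
      · simp [auxE]
    · cases b2
      · simp [auxE]
      · simpa [auxE] using (hle (x1, x2) hxH).2
    · cases b2
      · simpa [auxE] using (hle (x1, x2) hxH).2
      · simp [auxE]
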